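/- arXiv:1809.00249 — 4 statements merged into one kernel-verified Lean document; each statement's English description precedes it below -/
import Mathlib

section
/- Under the setup of the UPRE function U_k, its second derivative satisfies U_k''(α) = −(1/α) U_k'(α) + (8/α²)(Σ_{i=1}^k s_i² φ_i² γ_i (2γ_i − φ_i) − σ² Σ_{i=1}^k φ_i γ_i (γ_i − φ_i)) for α > 0, where γ_i = γ_i(α) and φ_i = φ_i(α). -/
theorem upre_second_derivative (k : ℕ) (σs s : ℕ → ℝ) (σ : ℝ) (hσ : 0 < σ)
    (hpos : ∀ i ∈ Finset.Icc 1 k, 0 < σs i)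
    (γ φ : ℕ → ℝ → ℝ)
    (hγ : ∀ i α, γ i α = (σs i)^2 / ((σs i)^2 + α^2))
    (hφ : ∀ i α, φ i α = α^2 / ((σs i)^2 + α^2))
    (U' : ℝ → ℝ)
    (hU' : ∀ α, U' α = (4/α) * (∑ i ∈ Finset.Icc 1 k, (s i)^2 * (φ i α)^2 * γ i α
                                 - σ^2 * ∑ i ∈ Finset.Icc 1 k, φ i α * γ i α)) :
    ∀ α : ℝ, 0 < α →
      HasDerivAt U'
        (-(1/α) * U' α
          + (8/α^2) * (∑ i ∈ Finset.Icc 1 k,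
                (s i)^2 * (φ i α)^2 * γ i α * (2 * γ i α - φ i α)
              - σ^2 * ∑ i ∈ Finset.Icc 1 k,
                φ i α * γ i α * (γ i α - φ i α))) α := by
  intro α hα
  have hα0 : α ≠ 0 := ne_of_gt hα
  set g : ℝ → ℝ := fun x => ∑ i ∈ Finset.Icc 1 k,
      (4*(s i)^2*(σs i)^2*x^3/((σs i)^2+x^2)^3 - 4*σ^2*(σs i)^2*x/((σs i)^2+x^2)^2)
    with hg
  have heq : U' =ᶠ[nhds α] g := by
    filter_upwards [eventually_ne_nhds hα0] with x hx
    have hdx : ∀ i : ℕ, ((σs i)^2 + x^2) ≠ 0 := fun i => by positivity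
    rw [hU' x, hg]
    simp only [hγ, hφ]
    rw [Finset.mul_sum, ← Finset.sum_sub_distrib, Finset.mul_sum]
    refine Finset.sum_congr rfl (fun i _ => ?_)
    field_simp
  have hdα : ∀ i : ℕ, ((σs i)^2 + α^2) ≠ 0 := fun i => by positivity
  have hderiv : HasDerivAt g
      (∑ i ∈ Finset.Icc 1 k,
        ((4*(s i)^2*(σs i)^2*(3*α^2) * ((σs i)^2+α^2)^3
            - 4*(s i)^2*(σs i)^2*α^3 * (3*((σs i)^2+α^2)^2*(2*α))) / (((σs i)^2+α^2)^3)^2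
         - (4*σ^2*(σs i)^2 * ((σs i)^2+α^2)^2
            - 4*σ^2*(σs i)^2*α * (2*((σs i)^2+α^2)*(2*α))) / (((σs i)^2+α^2)^2)^2)) α := by
    apply HasDerivAt.fun_sum
    intro i _
    have hnum1 : HasDerivAt (fun x : ℝ => 4*(s i)^2*(σs i)^2*x^3)
        (4*(s i)^2*(σs i)^2*(3*α^2)) α := by
      have := (hasDerivAt_pow 3 α).const_mul (4*(s i)^2*(σs i)^2)
      simpa using this
    have hden1 : HasDerivAt (fun x : ℝ => ((σs i)^2+x^2)^3)
        (3*((σs i)^2+α^2)^2*(2*α)) α := by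
      have h2 : HasDerivAt (fun x : ℝ => (σs i)^2 + x^2) (2*α) α := by
        simpa using (hasDerivAt_pow 2 α).const_add ((σs i)^2)
      have := h2.fun_pow 3
      simpa [mul_comm, mul_assoc, mul_left_comm] using this
    have hnum2 : HasDerivAt (fun x : ℝ => 4*σ^2*(σs i)^2*x) (4*σ^2*(σs i)^2) α := by
      simpa using (hasDerivAt_id α).const_mul (4*σ^2*(σs i)^2)
    have hden2 : HasDerivAt (fun x : ℝ => ((σs i)^2+x^2)^2)
        (2*((σs i)^2+α^2)*(2*α)) α := by
      have h2 : HasDerivAt (fun x : ℝ => (σs i)^2 + x^2) (2*α) α := by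
        simpa using (hasDerivAt_pow 2 α).const_add ((σs i)^2)
      have := h2.fun_pow 2
      simpa [mul_comm, mul_assoc, mul_left_comm] using this
    exact (hnum1.div hden1 (pow_ne_zero 3 (hdα i))).sub
      (hnum2.div hden2 (pow_ne_zero 2 (hdα i)))
  have := hderiv.congr_of_eventuallyEq heq
  refine this.congr_deriv ?_
  symm
  rw [hU' α]
  simp only [hγ, hφ]
  simp only [Finset.mul_sum, ← Finset.sum_sub_distrib]
  rw [← Finset.sum_add_distrib]
  refine Finset.sum_congr rfl (fun i _ => ?_)
  field_simp
  ring
end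

section
/- Let U_k be the UPRE function with singular values σ_1 ≥ ... ≥ σ_k > 0. If 0 < ᾱ < σ_k/√2 is a stationary point of U_k (U_k'(ᾱ) = 0), then U_k''(ᾱ) > 0; hence every stationary point of U_k in the open interval (0, σ_k/√2) is a local minimum, and there is at most one stationary point in this interval. -/
open Set Finset

private lemma upre_term_deriv (c t σ α : ℝ) (hc : 0 < c) :
    HasDerivAt (fun x : ℝ => (x^2/(c+x^2))^2 * t + 2*σ^2*(c/(c+x^2)))
      (4*α*(c*α^2*t/(c+α^2)^3 - σ^2*c/(c+α^2)^2)) α := by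
  have hd : (0:ℝ) < c + α^2 := by positivity
  have hne : c + α^2 ≠ 0 := ne_of_gt hd
  have h2 : HasDerivAt (fun x : ℝ => x^2) (2*α) α := by
    simpa using hasDerivAt_pow 2 α
  have hden : HasDerivAt (fun x : ℝ => c + x^2) (2*α) α := h2.const_add c
  have hq : HasDerivAt (fun x : ℝ => x^2/(c+x^2))
      ((2*α*(c+α^2) - α^2*(2*α))/(c+α^2)^2) α := h2.div hden hne
  have h1 := ((hq.pow 2).mul_const t).add
    (((hasDerivAt_const α c).div hden hne).const_mul (2*σ^2))
  refine h1.congr_deriv ?_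
  have h3 : ((2:ℕ):ℝ) = 2 := by norm_num
  norm_num
  field_simp
  ring

private lemma upre_gterm_deriv (c t σ α : ℝ) (hc : 0 < c) :
    HasDerivAt (fun x : ℝ => c*x^2*t/(c+x^2)^3 - σ^2*c/(c+x^2)^2)
      (2*c*t*α*(c-2*α^2)/(c+α^2)^4 + 4*σ^2*c*α/(c+α^2)^3) α := by
  have hd : (0:ℝ) < c + α^2 := by positivity
  have hne : c + α^2 ≠ 0 := ne_of_gt hd
  have h2 : HasDerivAt (fun x : ℝ => x^2) (2*α) α := by
    simpa using hasDerivAt_pow 2 α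
  have hden : HasDerivAt (fun x : ℝ => c + x^2) (2*α) α := h2.const_add c
  have hn1 : HasDerivAt (fun x : ℝ => c*x^2*t) (c*(2*α)*t) α := (h2.const_mul c).mul_const t
  have hA := hn1.div (hden.pow 3) (pow_ne_zero 3 hne)
  have hB := (hasDerivAt_const α (σ^2*c)).div (hden.pow 2) (pow_ne_zero 2 hne)
  have h := hA.sub hB
  refine h.congr_deriv ?_
  norm_num
  field_simp
  ring

theorem upre_unique_min (k : ℕ) (hk : 0 < k) (σs s : ℕ → ℝ) (σ : ℝ) (hσ : 0 < σ)
    (hpos : ∀ i ∈ Finset.Icc 1 k, 0 < σs i)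
    (hord : ∀ i ∈ Finset.Icc 1 k, ∀ j ∈ Finset.Icc 1 k, i ≤ j → σs j ≤ σs i)
    (hs : ∃ i ∈ Finset.Icc 1 k, s i ≠ 0)
    (U : ℝ → ℝ)
    (hU : ∀ α, U α = ∑ i ∈ Finset.Icc 1 k, (α^2 / ((σs i)^2 + α^2))^2 * (s i)^2
                      + 2 * σ^2 * ∑ i ∈ Finset.Icc 1 k, (σs i)^2 / ((σs i)^2 + α^2)) :
    (∀ ᾱ : ℝ, 0 < ᾱ → ᾱ < σs k / Real.sqrt 2 → deriv U ᾱ = 0 →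
        deriv (deriv U) ᾱ > 0 ∧ IsLocalMin U ᾱ) ∧
    (∀ α₁ ∈ Set.Ioo 0 (σs k / Real.sqrt 2), ∀ α₂ ∈ Set.Ioo 0 (σs k / Real.sqrt 2),
        deriv U α₁ = 0 → deriv U α₂ = 0 → α₁ = α₂) := by
  classical
  set b := σs k / Real.sqrt 2 with hbdef
  have hk' : k ∈ Finset.Icc 1 k := by simp [Finset.mem_Icc]; omega
  have hσk : 0 < σs k := hpos k hk'
  -- G and G'
  set G : ℝ → ℝ := fun α => ∑ i ∈ Finset.Icc 1 k,
      ((σs i)^2*α^2*(s i)^2/((σs i)^2+α^2)^3 - σ^2*(σs i)^2/((σs i)^2+α^2)^2) with hGdef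
  set G' : ℝ → ℝ := fun α => ∑ i ∈ Finset.Icc 1 k,
      (2*(σs i)^2*(s i)^2*α*((σs i)^2-2*α^2)/((σs i)^2+α^2)^4
        + 4*σ^2*(σs i)^2*α/((σs i)^2+α^2)^3) with hG'def
  have hUeq : U = fun α => ∑ i ∈ Finset.Icc 1 k,
      ((α^2/((σs i)^2+α^2))^2*(s i)^2 + 2*σ^2*((σs i)^2/((σs i)^2+α^2))) := by
    funext α
    rw [hU, Finset.mul_sum, ← Finset.sum_add_distrib]
  have hUd : ∀ α : ℝ, HasDerivAt U (4*α*G α) α := by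
    intro α
    rw [hUeq]
    have h := HasDerivAt.fun_sum (u := Finset.Icc 1 k)
      (fun i hi => upre_term_deriv ((σs i)^2) ((s i)^2) σ α (by
        have := hpos i hi; positivity))
    refine h.congr_deriv ?_
    simp only [hGdef, Finset.mul_sum]
  have hGd : ∀ α : ℝ, HasDerivAt G (G' α) α := by
    intro α
    rw [hGdef, hG'def]
    exact HasDerivAt.fun_sum (fun i hi => upre_gterm_deriv ((σs i)^2) ((s i)^2) σ α (by
      have := hpos i hi; positivity))
  have hderivU : ∀ α : ℝ, deriv U α = 4*α*G α := fun α => (hUd α).deriv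
  have hderivUfun : deriv U = fun α => 4*α*G α := funext hderivU
  have hderiv2 : ∀ α : ℝ, HasDerivAt (deriv U) (4*G α + 4*α*G' α) α := by
    intro α
    rw [hderivUfun]
    have h := ((hasDerivAt_id α).const_mul 4).mul (hGd α)
    refine h.congr_deriv ?_
    simp only [id_eq]
    ring
  -- positivity of G' on (0, b)
  have hG'pos : ∀ α ∈ Set.Ioo (0:ℝ) b, 0 < G' α := by
    intro α hα
    obtain ⟨hα0, hαb⟩ := hα
    have hs2 : (0:ℝ) < Real.sqrt 2 := by positivity
    have h1 : α * Real.sqrt 2 < σs k := (lt_div_iff₀ hs2).mp hαb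
    have h2 : (α * Real.sqrt 2)^2 < (σs k)^2 := by
      apply pow_lt_pow_left₀ h1 (by positivity)
      norm_num
    have h2' : 2*α^2 < (σs k)^2 := by
      have : (α * Real.sqrt 2)^2 = 2*α^2 := by
        rw [mul_pow, Real.sq_sqrt (by norm_num : (0:ℝ) ≤ 2)]; ring
      linarith [this ▸ h2]
    rw [hG'def]
    apply Finset.sum_pos _ ⟨k, hk'⟩
    intro i hi
    have hσi : 0 < σs i := hpos i hi
    have hki : σs k ≤ σs i := by
      have hik : i ≤ k := (Finset.mem_Icc.mp hi).2
      exact hord i hi k hk' hik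
    have hkey : 0 ≤ (σs i)^2 - 2*α^2 := by nlinarith
    have hnum : 0 ≤ 2*(σs i)^2*(s i)^2*α*((σs i)^2-2*α^2) := by
      have h3 : 0 ≤ 2*(σs i)^2*(s i)^2*α := by positivity
      exact mul_nonneg h3 hkey
    have hfi : 0 ≤ 2*(σs i)^2*(s i)^2*α*((σs i)^2-2*α^2)/((σs i)^2+α^2)^4 :=
      div_nonneg hnum (by positivity)
    have hse : 0 < 4*σ^2*(σs i)^2*α/((σs i)^2+α^2)^3 := by positivity
    linarith
  -- strict monotonicity of G on (0, b)
  have hGmono : StrictMonoOn G (Set.Ioo 0 b) := by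
    apply strictMonoOn_of_deriv_pos (convex_Ioo 0 b)
    · exact fun x _ => (hGd x).differentiableAt.continuousAt.continuousWithinAt
    · intro x hx
      rw [interior_Ioo] at hx
      rw [(hGd x).deriv]
      exact hG'pos x hx
  have hGzero : ∀ α : ℝ, 0 < α → deriv U α = 0 → G α = 0 := by
    intro α hα h
    rw [hderivU α] at h
    rcases mul_eq_zero.mp h with h' | h'
    · rcases mul_eq_zero.mp h' with h'' | h''
      · norm_num at h''
      · exact absurd h'' (ne_of_gt hα)
    · exact h'
  constructor
  · intro ᾱ h0 hb hderiv
    have hGᾱ : G ᾱ = 0 := hGzero ᾱ h0 hderiv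
    have hmem : ᾱ ∈ Set.Ioo (0:ℝ) b := ⟨h0, hb⟩
    constructor
    · rw [(hderiv2 ᾱ).deriv, hGᾱ]
      have := hG'pos ᾱ hmem
      nlinarith
    · apply isLocalMin_of_deriv_Ioo (a := 0) (c := b) h0 hb
        (hUd ᾱ).differentiableAt.continuousAt
        (fun x _ => (hUd x).differentiableAt.differentiableWithinAt)
        (fun x _ => (hUd x).differentiableAt.differentiableWithinAt)
      · intro x hx
        have hxm : x ∈ Set.Ioo (0:ℝ) b := ⟨hx.1, lt_trans hx.2 hb⟩
        have : G x < G ᾱ := hGmono hxm hmem hx.2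
        rw [hderivU x]
        nlinarith [hx.1, hGᾱ]
      · intro x hx
        have hxm : x ∈ Set.Ioo (0:ℝ) b := ⟨lt_trans h0 hx.1, hx.2⟩
        have : G ᾱ < G x := hGmono hmem hxm hx.1
        rw [hderivU x]
        nlinarith [hxm.1, hGᾱ]
  · intro α₁ hα₁ α₂ hα₂ h1 h2
    have g1 : G α₁ = 0 := hGzero α₁ hα₁.1 h1
    have g2 : G α₂ = 0 := hGzero α₂ hα₂.1 h2
    exact hGmono.injOn hα₁ hα₂ (by rw [g1, g2])
end

section
/- Let σ_i > 0 with s_i² = σ² for ℓ < i ≤ k, and suppose α > σ_{ℓ+1}/√5. Then U_k''(α) = U_ℓ''(α) + (4σ²/α²) Σ_{i=ℓ+1}^k φ_i γ_i(−6φ_i² + 7φ_i − 1) > U_ℓ''(α), since each summand is positive. -/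
open Finset

private lemma hasDeriv_term (c s2 σ x : ℝ) (hc : 0 < c) :
    HasDerivAt (fun α : ℝ => (α^2/(c+α^2))^2 * s2 + 2*σ^2*(c/(c+α^2)))
      (4*c*x^3*s2/(c+x^2)^3 - 4*σ^2*c*x/(c+x^2)^2) x := by
  have hden : c + x^2 ≠ 0 := by positivity
  have h1 : HasDerivAt (fun α : ℝ => α^2) (2*x) x := by
    simpa using hasDerivAt_pow 2 x
  have h2 : HasDerivAt (fun α : ℝ => c + α^2) (2*x) x := h1.const_add c
  have h3 := h1.div h2 hden
  have h4 := (h3.pow 2).mul_const s2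
  have h5 := ((hasDerivAt_const x c).div h2 hden).const_mul (2*σ^2)
  have h6 := h4.add h5
  refine h6.congr_deriv ?_
  simp only [Pi.div_apply, Pi.pow_apply, id]
  norm_num only [pow_one]
  field_simp
  ring

private lemma hasDeriv_term2 (c s2 σ x : ℝ) (hc : 0 < c) :
    HasDerivAt (fun α : ℝ => 4*c*α^3*s2/(c+α^2)^3 - 4*σ^2*c*α/(c+α^2)^2)
      (12*c*s2*x^2*(c-x^2)/(c+x^2)^4 - 4*σ^2*c*(c-3*x^2)/(c+x^2)^3) x := by
  have hden : c + x^2 ≠ 0 := by positivity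
  have hden3 : (c + x^2)^3 ≠ 0 := pow_ne_zero _ hden
  have hden2 : (c + x^2)^2 ≠ 0 := pow_ne_zero _ hden
  have h1 : HasDerivAt (fun α : ℝ => α^2) (2*x) x := by
    simpa using hasDerivAt_pow 2 x
  have h2 : HasDerivAt (fun α : ℝ => c + α^2) (2*x) x := h1.const_add c
  have h3 : HasDerivAt (fun α : ℝ => α^3) (3*x^2) x := by
    simpa using hasDerivAt_pow 3 x
  have hn1 := (h3.const_mul (4*c)).mul_const s2
  have hq1 := hn1.div (h2.pow 3) hden3
  have hn2 := (hasDerivAt_id x).const_mul (4*σ^2*c)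
  have hq2 := hn2.div (h2.pow 2) hden2
  have h6 := hq1.sub hq2
  refine h6.congr_deriv ?_
  simp only [Pi.div_apply, Pi.pow_apply, id]
  field_simp
  ring

theorem upre_second_derivative_nesting (ℓ k : ℕ) (hℓk : ℓ < k)
    (σs s : ℕ → ℝ) (σ : ℝ) (hσ : 0 < σ)
    (hpos : ∀ i ∈ Finset.Icc 1 k, 0 < σs i)
    (hord : ∀ i ∈ Finset.Icc 1 k, ∀ j ∈ Finset.Icc 1 k, i ≤ j → σs j ≤ σs i)
    (hnoise : ∀ i, ℓ < i → i ≤ k → (s i)^2 = σ^2)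
    (γ φ : ℕ → ℝ → ℝ)
    (hγ : ∀ i α, γ i α = (σs i)^2 / ((σs i)^2 + α^2))
    (hφ : ∀ i α, φ i α = α^2 / ((σs i)^2 + α^2))
    (U : ℕ → ℝ → ℝ)
    (hU : ∀ m α, U m α = ∑ i ∈ Finset.Icc 1 m, (φ i α)^2 * (s i)^2
                      + 2 * σ^2 * ∑ i ∈ Finset.Icc 1 m, γ i α) :
    ∀ α : ℝ, σs (ℓ+1) / Real.sqrt 5 < α →
      deriv (deriv (U k)) α = deriv (deriv (U ℓ)) α
          + (4*σ^2/α^2) * ∑ i ∈ Finset.Icc (ℓ+1) k,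
              φ i α * γ i α * (-6*(φ i α)^2 + 7*(φ i α) - 1) ∧
      deriv (deriv (U k)) α > deriv (deriv (U ℓ)) α := by
  intro α hα
  have h5 : (0:ℝ) < Real.sqrt 5 := by positivity
  have hℓ1mem : ℓ + 1 ∈ Finset.Icc 1 k := Finset.mem_Icc.mpr ⟨Nat.le_add_left 1 ℓ, hℓk⟩
  have hσℓ1 : 0 < σs (ℓ+1) := hpos _ hℓ1mem
  have hα0 : 0 < α := lt_trans (div_pos hσℓ1 h5) hα
  have hα' : α ≠ 0 := ne_of_gt hα0
  -- membership facts
  have hsub : ∀ i ∈ Finset.Icc (ℓ+1) k, i ∈ Finset.Icc 1 k := by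
    intro i hi
    rw [Finset.mem_Icc] at hi ⊢
    exact ⟨le_trans (Nat.le_add_left 1 ℓ) hi.1, hi.2⟩
  -- 5α² > σs i² on the tail
  have h5α : ∀ i ∈ Finset.Icc (ℓ+1) k, (σs i)^2 < 5*α^2 := by
    intro i hi
    have hi' := hsub i hi
    have hle : σs i ≤ σs (ℓ+1) :=
      hord (ℓ+1) hℓ1mem i hi' (Finset.mem_Icc.mp hi).1
    have h1 : σs (ℓ+1) < Real.sqrt 5 * α := by
      rw [div_lt_iff₀ h5] at hα
      linarith [hα]
    have hσi : 0 < σs i := hpos i hi'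
    have h2 : (σs i)^2 < (Real.sqrt 5 * α)^2 := by
      apply sq_lt_sq' <;> nlinarith
    have h3 : (Real.sqrt 5 * α)^2 = 5*α^2 := by
      rw [mul_pow, Real.sq_sqrt (by norm_num : (5:ℝ) ≥ 0)]
    linarith [h2, h3.symm ▸ h2]
  -- rewrite U m as a single sum
  have hUeq : ∀ m, U m = fun x : ℝ => ∑ i ∈ Finset.Icc 1 m,
      ((x^2/((σs i)^2+x^2))^2 * (s i)^2 + 2*σ^2*((σs i)^2/((σs i)^2+x^2))) := by
    intro m; funext x
    rw [hU, Finset.mul_sum, ← Finset.sum_add_distrib]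
    refine Finset.sum_congr rfl fun i _ => ?_
    rw [hγ, hφ]
  have hposc : ∀ m, m ≤ k → ∀ i ∈ Finset.Icc 1 m, 0 < (σs i)^2 := by
    intro m hm i hi
    rw [Finset.mem_Icc] at hi
    have := hpos i (Finset.mem_Icc.mpr ⟨hi.1, le_trans hi.2 hm⟩)
    positivity
  -- first derivative
  have hD1 : ∀ m, m ≤ k → ∀ x : ℝ, HasDerivAt (U m)
      (∑ i ∈ Finset.Icc 1 m,
        (4*(σs i)^2*x^3*(s i)^2/((σs i)^2+x^2)^3 - 4*σ^2*(σs i)^2*x/((σs i)^2+x^2)^2)) x := by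
    intro m hm x
    rw [hUeq m]
    exact HasDerivAt.fun_sum fun i hi => hasDeriv_term _ _ _ _ (hposc m hm i hi)
  have hderiv1 : ∀ m, m ≤ k → deriv (U m) = fun x : ℝ => ∑ i ∈ Finset.Icc 1 m,
      (4*(σs i)^2*x^3*(s i)^2/((σs i)^2+x^2)^3 - 4*σ^2*(σs i)^2*x/((σs i)^2+x^2)^2) := by
    intro m hm
    funext x
    exact (hD1 m hm x).deriv
  -- second derivative at α
  have hdd : ∀ m, m ≤ k → deriv (deriv (U m)) α = ∑ i ∈ Finset.Icc 1 m,
      (12*(σs i)^2*(s i)^2*α^2*((σs i)^2-α^2)/((σs i)^2+α^2)^4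
        - 4*σ^2*(σs i)^2*((σs i)^2-3*α^2)/((σs i)^2+α^2)^3) := by
    intro m hm
    rw [hderiv1 m hm]
    exact HasDerivAt.deriv
      (HasDerivAt.fun_sum fun i hi => hasDeriv_term2 _ _ _ _ (hposc m hm i hi))
  set G : ℕ → ℝ := fun i =>
      12*(σs i)^2*(s i)^2*α^2*((σs i)^2-α^2)/((σs i)^2+α^2)^4
        - 4*σ^2*(σs i)^2*((σs i)^2-3*α^2)/((σs i)^2+α^2)^3 with hG
  -- split the sum
  have hsplit : ∑ i ∈ Finset.Icc 1 k, G i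
      = ∑ i ∈ Finset.Icc 1 ℓ, G i + ∑ i ∈ Finset.Icc (ℓ+1) k, G i := by
    rw [show Finset.Icc 1 k = Finset.Ioc 0 k from Finset.Icc_add_one_left_eq_Ioc (a := 0) (b := k),
      show Finset.Icc 1 ℓ = Finset.Ioc 0 ℓ from Finset.Icc_add_one_left_eq_Ioc (a := 0) (b := ℓ),
      Finset.Icc_add_one_left_eq_Ioc]
    exact (Finset.sum_Ioc_consecutive _ (Nat.zero_le ℓ) (le_of_lt hℓk)).symm
  -- tail term identity
  have htail : ∀ i ∈ Finset.Icc (ℓ+1) k,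
      G i = (4*σ^2/α^2) * (φ i α * γ i α * (-6*(φ i α)^2 + 7*(φ i α) - 1)) := by
    intro i hi
    have hi' := Finset.mem_Icc.mp hi
    have hs : (s i)^2 = σ^2 := hnoise i hi'.1 hi'.2
    have hσi : 0 < σs i := hpos i (hsub i hi)
    have hden : (σs i)^2 + α^2 ≠ 0 := by positivity
    simp only [hG, hφ, hγ, hs]
    field_simp
    ring
  -- tail term positivity
  have hGpos : ∀ i ∈ Finset.Icc (ℓ+1) k, 0 < G i := by
    intro i hi
    have hi' := Finset.mem_Icc.mp hi
    have hs : (s i)^2 = σ^2 := hnoise i hi'.1 hi'.2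
    have hσi : 0 < σs i := hpos i (hsub i hi)
    have hden : (0:ℝ) < (σs i)^2 + α^2 := by positivity
    have h5i := h5α i hi
    have hval : G i = 4*σ^2*((σs i)^2)^2*(5*α^2 - (σs i)^2)/((σs i)^2+α^2)^4 := by
      simp only [hG, hs]
      field_simp
      ring
    rw [hval]
    have h1 : 0 < 5*α^2 - (σs i)^2 := by linarith
    positivity
  have hsumpos : 0 < ∑ i ∈ Finset.Icc (ℓ+1) k, G i :=
    Finset.sum_pos hGpos ⟨ℓ+1, Finset.mem_Icc.mpr ⟨le_rfl, hℓk⟩⟩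
  constructor
  · rw [hdd k le_rfl, hdd ℓ (le_of_lt hℓk), hsplit, Finset.mul_sum]
    congr 1
    exact Finset.sum_congr rfl htail
  · rw [hdd k le_rfl, hdd ℓ (le_of_lt hℓk), hsplit]
    linarith
end

section
/- Let 0 < σ_ℓ < 1 and s_i² satisfy s_i² < σ_i² for i ≤ ℓ, and s_i² > σ² for i ≤ ℓ where σ_{ℓ+1}² < σ² < σ_ℓ². Consider U_ℓ(α) = Σ_{i=1}^ℓ φ_i(α)² s_i² + 2σ² Σ_{i=1}^ℓ γ_i(α). If 0 < α² < σ_{ℓ+1}²/(1 − σ_{ℓ+1}²), then U_ℓ'(α) < 0; hence any minimizer α_ℓ of U_ℓ on (0, ∞) satisfies α_ℓ² > σ_{ℓ+1}²/(1 − σ_{ℓ+1}²). -/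
theorem upre_lower_bound (ℓ : ℕ) (hℓ : 0 < ℓ) (σs s : ℕ → ℝ) (σ : ℝ)
    (hpos : ∀ i ∈ Finset.Icc 1 (ℓ+1), 0 < σs i)
    (hord : ∀ i ∈ Finset.Icc 1 (ℓ+1), ∀ j ∈ Finset.Icc 1 (ℓ+1), i ≤ j → σs j ≤ σs i)
    (hσℓ1 : σs (ℓ+1) < 1)
    (hnoise : (σs (ℓ+1))^2 < σ^2 ∧ σ^2 < (σs ℓ)^2)
    (hs : ∀ i ∈ Finset.Icc 1 ℓ, (σs i)^4 < (s i)^2 ∧ (s i)^2 < (σs i)^2)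
    (γ φ : ℕ → ℝ → ℝ)
    (hγ : ∀ i α, γ i α = (σs i)^2 / ((σs i)^2 + α^2))
    (hφ : ∀ i α, φ i α = α^2 / ((σs i)^2 + α^2))
    (U : ℝ → ℝ)
    (hU : ∀ α, U α = ∑ i ∈ Finset.Icc 1 ℓ, (φ i α)^2 * (s i)^2
                      + 2 * σ^2 * ∑ i ∈ Finset.Icc 1 ℓ, γ i α) :
    (∀ α : ℝ, 0 < α → α^2 < (σs (ℓ+1))^2 / (1 - (σs (ℓ+1))^2) → deriv U α < 0) ∧
    (∀ αℓ : ℝ, 0 < αℓ → IsMinOn U (Set.Ioi 0) αℓ →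
        αℓ^2 > (σs (ℓ+1))^2 / (1 - (σs (ℓ+1))^2)) := by
  set t : ℝ := (σs (ℓ+1))^2 with ht
  have hℓ1mem : (ℓ+1) ∈ Finset.Icc 1 (ℓ+1) := by simp [Finset.mem_Icc]
  have htpos : 0 < t := by
    have := hpos (ℓ+1) hℓ1mem; positivity
  have ht1 : t < 1 := by
    have h0 := hpos (ℓ+1) hℓ1mem
    nlinarith
  have hσ2 : t < σ^2 := hnoise.1
  have hσpos : 0 < σ^2 := lt_trans htpos hσ2
  have hUF : U = fun β => ∑ i ∈ Finset.Icc 1 ℓ,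
      ((β^2/((σs i)^2+β^2))^2 * (s i)^2 + 2*σ^2*((σs i)^2/((σs i)^2+β^2))) := by
    funext β
    simp only [hU, hφ, hγ, Finset.mul_sum, ← Finset.sum_add_distrib]
  have key : ∀ α : ℝ, 0 < α → α^2 ≤ t / (1 - t) → deriv U α < 0 := by
    intro α hα hαB
    have hα2 : 0 < α^2 := by positivity
    have hαt : α^2 * (1 - t) ≤ t := by
      have h1t : (0:ℝ) < 1 - t := by linarith
      calc α^2 * (1-t) ≤ (t/(1-t)) * (1-t) := by
            exact mul_le_mul_of_nonneg_right hαB (le_of_lt h1t)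
        _ = t := by field_simp
    have hder : ∀ i ∈ Finset.Icc 1 ℓ, HasDerivAt
        (fun β => ((β^2/((σs i)^2+β^2))^2 * (s i)^2 + 2*σ^2*((σs i)^2/((σs i)^2+β^2))))
        (4*α*(σs i)^2*(α^2*(s i)^2 - σ^2*((σs i)^2+α^2))/((σs i)^2+α^2)^3) α := by
      intro i hi
      have himem : i ∈ Finset.Icc 1 (ℓ+1) := by
        simp only [Finset.mem_Icc] at hi ⊢; omega
      have hc : 0 < (σs i)^2 := by have := hpos i himem; positivity
      have hd : 0 < (σs i)^2 + α^2 := by positivity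
      have hne : (σs i)^2 + α^2 ≠ 0 := ne_of_gt hd
      have h1 : HasDerivAt (fun β : ℝ => β^2) (2*α) α := by
        simpa using (hasDerivAt_pow 2 α)
      have hden : HasDerivAt (fun β : ℝ => (σs i)^2 + β^2) (2*α) α :=
        h1.const_add ((σs i)^2)
      have hq : HasDerivAt (fun β => β^2/((σs i)^2+β^2))
          ((2*α*((σs i)^2+α^2) - α^2*(2*α))/((σs i)^2+α^2)^2) α := h1.div hden hne
      have hsq := ((hq.fun_pow 2).mul_const ((s i)^2))
      have hg : HasDerivAt (fun β => (σs i)^2/((σs i)^2+β^2))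
          ((0*((σs i)^2+α^2) - (σs i)^2*(2*α))/((σs i)^2+α^2)^2) α :=
        (hasDerivAt_const α ((σs i)^2)).div hden hne
      have htot := hsq.add (hg.const_mul (2*σ^2))
      refine htot.congr_deriv ?_
      simp only [Nat.cast_ofNat, show (2:ℕ) - 1 = 1 from rfl, pow_one]
      field_simp
      ring
    have hsum : HasDerivAt (fun β => ∑ i ∈ Finset.Icc 1 ℓ,
        ((β^2/((σs i)^2+β^2))^2 * (s i)^2 + 2*σ^2*((σs i)^2/((σs i)^2+β^2))))
        (∑ i ∈ Finset.Icc 1 ℓ,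
          4*α*(σs i)^2*(α^2*(s i)^2 - σ^2*((σs i)^2+α^2))/((σs i)^2+α^2)^3) α :=
      HasDerivAt.fun_sum hder
    rw [hUF, hsum.deriv]
    have hne : (Finset.Icc 1 ℓ).Nonempty := Finset.nonempty_Icc.mpr hℓ
    apply Finset.sum_neg _ hne
    intro i hi
    have himem : i ∈ Finset.Icc 1 (ℓ+1) := by
      simp only [Finset.mem_Icc] at hi ⊢; omega
    have hc : 0 < (σs i)^2 := by have := hpos i himem; positivity
    have hd : 0 < (σs i)^2 + α^2 := by positivity
    have hsi := hs i hi
    have hc1 : (σs i)^2 < 1 := by nlinarith [hsi.1, hsi.2]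
    have hkey : α^2*(s i)^2 - σ^2*((σs i)^2+α^2) < 0 := by
      nlinarith [mul_lt_mul_of_pos_left hsi.2 hα2,
        mul_le_mul_of_nonneg_right hαt (le_of_lt hc),
        mul_lt_mul_of_pos_right hσ2 hc,
        mul_lt_mul_of_pos_left (mul_lt_mul_of_pos_left hc1 htpos) hα2,
        mul_lt_mul_of_pos_left hσ2 hα2]
    apply div_neg_of_neg_of_pos
    · have h4 : 0 < 4*α*(σs i)^2 := by positivity
      nlinarith [mul_pos h4 (neg_pos.mpr hkey)]
    · positivity
  constructor
  · intro α hα hαB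
    exact key α hα (le_of_lt hαB)
  · intro αℓ hαℓ hmin
    by_contra h
    push_neg at h
    have hderiv0 : deriv U αℓ = 0 := by
      have hloc : IsLocalMin U αℓ :=
        hmin.isLocalMin (IsOpen.mem_nhds isOpen_Ioi hαℓ)
      exact hloc.deriv_eq_zero
    have := key αℓ hαℓ h
    linarith
end
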